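/- Let p ∈ ℤ[x] be a monic polynomial of degree d, irreducible over ℚ, with d distinct real roots ζ₁,…,ζ_d. Then the Vandermonde matrix B = (ζ_i^{j−1})_{i,j=1}^d is invertible and satisfies |∏_{j=1}^d (Bm)_j| ≥ 1 for every m ∈ ℤ^d \ {0}. -/

import Mathlib

open Matrix

/-- If `p ∈ ℤ[x]` is monic of degree `d`, irreducible over `ℚ`, with `d` distinct real
roots `ζ₁,…,ζ_d`, then the Vandermonde matrix `B = (ζ_i^{j-1})` is invertible and
`|∏_j (Bm)_j| ≥ 1` for every nonzero `m ∈ ℤ^d`. -/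
theorem stmt2 (d : ℕ) (hd : 0 < d) (p : Polynomial ℤ) (hmonic : p.Monic)
    (hdeg : p.natDegree = d) (hirr : Irreducible (p.map (Int.castRingHom ℚ)))
    (ζ : Fin d → ℝ) (hinj : Function.Injective ζ)
    (hroot : ∀ i, Polynomial.aeval (ζ i) p = 0) :
    (Matrix.of fun i j : Fin d => ζ i ^ (j : ℕ)).det ≠ 0 ∧
    ∀ m : Fin d → ℤ, m ≠ 0 →
      1 ≤ |∏ j, ((Matrix.of fun i j : Fin d => ζ i ^ (j : ℕ)) *ᵥ fun k => (m k : ℝ)) j| := by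
  constructor
  · exact Matrix.det_vandermonde_ne_zero_iff.mpr hinj
  intro m hm
  set P : Polynomial ℚ := p.map (Int.castRingHom ℚ) with hP
  have hPmonic : P.Monic := hmonic.map _
  have hPdeg : P.natDegree = d := by rw [hP, hmonic.natDegree_map, hdeg]
  have hP0 : P ≠ 0 := hPmonic.ne_zero
  haveI : Fact (Irreducible P) := ⟨hirr⟩
  set K := AdjoinRoot P with hK
  haveI : FiniteDimensional ℚ K := PowerBasis.finite (AdjoinRoot.powerBasis hP0)
  have hfinrank : Module.finrank ℚ K = d := by
    rw [(AdjoinRoot.powerBasis hP0).finrank]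
    exact hPdeg
  set x : K := AdjoinRoot.root P with hx
  have haevalP : Polynomial.aeval x P = 0 := by
    rw [hx]
    exact (AdjoinRoot.aeval_eq P).trans AdjoinRoot.mk_self
  set Q : Polynomial ℚ := ∑ k : Fin d, Polynomial.monomial (k : ℕ) ((m k : ℚ)) with hQ
  have hQcoeff : ∀ k : Fin d, Q.coeff k = (m k : ℚ) := by
    intro k
    rw [hQ, Polynomial.finset_sum_coeff]
    rw [Finset.sum_eq_single k]
    · simp
    · intro b _ hb
      rw [Polynomial.coeff_monomial, if_neg (fun h => hb (Fin.ext h))]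
    · simp
  have hQdeg : Q.natDegree < d := by
    have : Q.natDegree ≤ d - 1 := by
      apply Polynomial.natDegree_sum_le_of_forall_le
      intro k _
      exact le_trans (Polynomial.natDegree_monomial_le _) (Nat.le_sub_one_of_lt k.isLt)
    omega
  have hQ0 : Q ≠ 0 := by
    intro h
    apply hm
    funext k
    have := hQcoeff k
    rw [h, Polynomial.coeff_zero] at this
    exact_mod_cast this.symm
  set y : K := Polynomial.aeval x Q with hy
  have hminx : minpoly ℚ x = P :=
    (minpoly.eq_of_irreducible_of_monic hirr haevalP hPmonic).symm
  have hy0 : y ≠ 0 := by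
    intro h
    have hdle := minpoly.degree_le_of_ne_zero ℚ x hQ0 h
    rw [hminx] at hdle
    have := Polynomial.natDegree_le_natDegree hdle
    omega
  have hrootP : ∀ j, Polynomial.aeval (ζ j) P = 0 := by
    intro j
    rw [hP, show (Int.castRingHom ℚ) = algebraMap ℤ ℚ from rfl,
      Polynomial.aeval_map_algebraMap]
    exact hroot j
  set σ : Fin d → (K →ₐ[ℚ] ℝ) := fun j => AdjoinRoot.liftAlgHom P (Algebra.ofId ℚ ℝ) (ζ j) (hrootP j) with hσ
  have hσroot : ∀ j, σ j x = ζ j := fun j => AdjoinRoot.liftAlgHom_root P _ _ (hrootP j)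
  set e : Fin d → (K →ₐ[ℚ] ℂ) := fun j => (Complex.ofRealAm.restrictScalars ℚ).comp (σ j) with he
  have hebij : Function.Bijective e := by
    rw [Fintype.bijective_iff_injective_and_card]
    constructor
    · intro i j hij
      apply hinj
      have h2 : e i x = e j x := by rw [hij]
      simp only [he, AlgHom.coe_comp, Function.comp_apply, AlgHom.coe_restrictScalars',
        Complex.ofRealAm_coe] at h2
      rw [hσroot i, hσroot j] at h2
      exact_mod_cast h2
    · rw [AlgHom.card, hfinrank, Fintype.card_fin]
  have hnorm : algebraMap ℚ ℂ (Algebra.norm ℚ y) = ∏ σ' : K →ₐ[ℚ] ℂ, σ' y :=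
    Algebra.norm_eq_prod_embeddings ℚ ℂ y
  have hprod : ((∏ j, (σ j) y : ℝ) : ℂ) = ∏ σ' : K →ₐ[ℚ] ℂ, σ' y := by
    rw [← Fintype.prod_bijective e hebij _ _ (fun j => rfl)]
    push_cast
    rfl
  have key : (algebraMap ℚ ℝ (Algebra.norm ℚ y)) = ∏ j, (σ j) y := by
    have h3 : ((algebraMap ℚ ℝ (Algebra.norm ℚ y) : ℝ) : ℂ) = ((∏ j, (σ j) y : ℝ) : ℂ) := by
      rw [hprod, ← hnorm]
      norm_num
    exact_mod_cast h3
  have hyint : IsIntegral ℤ y := by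
    have hxint : IsIntegral ℤ x := by
      refine ⟨p, hmonic, ?_⟩
      rw [show (Polynomial.eval₂ (algebraMap ℤ K) x p) = Polynomial.aeval x p from rfl,
        ← Polynomial.aeval_map_algebraMap ℚ, show Polynomial.map (algebraMap ℤ ℚ) p = P from rfl,
        haevalP]
    rw [hy, hQ, map_sum]
    apply IsIntegral.sum
    intro k _
    rw [Polynomial.aeval_monomial]
    apply IsIntegral.mul
    · have h4 : algebraMap ℚ K ((m k : ℚ)) = algebraMap ℤ K (m k) := by
        rw [IsScalarTower.algebraMap_apply ℤ ℚ K]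
        norm_num
      rw [h4]
      exact isIntegral_algebraMap
    · exact hxint.pow _
  have hnormint : IsIntegral ℤ (Algebra.norm ℚ y) := Algebra.isIntegral_norm ℚ hyint
  obtain ⟨z, hz⟩ := IsIntegrallyClosed.isIntegral_iff.mp hnormint
  have hz0 : z ≠ 0 := by
    intro h
    exact (Algebra.norm_ne_zero_iff.mpr hy0) (by rw [← hz, h]; simp)
  have hσy : ∀ j, σ j y = ∑ k : Fin d, (m k : ℝ) * ζ j ^ (k : ℕ) := by
    intro j
    rw [hy, ← Polynomial.aeval_algHom_apply, hσroot j, hQ, map_sum]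
    congr 1
    funext k
    rw [Polynomial.aeval_monomial]
    norm_num
  have hBm : ∀ j, ((Matrix.of fun i j : Fin d => ζ i ^ (j : ℕ)) *ᵥ fun k => (m k : ℝ)) j
      = σ j y := by
    intro j
    rw [hσy j, Matrix.mulVec, dotProduct]
    congr 1
    funext k
    rw [Matrix.of_apply]
    ring
  have h1z : (1:ℝ) ≤ |(z:ℝ)| := by
    rw [← Int.cast_abs]
    exact_mod_cast Int.one_le_abs hz0
  have hfinal : ∏ j, ((Matrix.of fun i j : Fin d => ζ i ^ (j : ℕ)) *ᵥ fun k => (m k : ℝ)) j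
      = (z : ℝ) := by
    rw [Finset.prod_congr rfl (fun j _ => hBm j), ← key, ← hz]
    push_cast
    norm_num
  rw [hfinal]
  exact h1z
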